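/- arXiv:1705.01380 — 2 statements merged into one kernel-verified Lean document; each statement's English description precedes it below -/
import Mathlib

section
/- Let p be an odd prime, w an integer with 1 ≤ w ≤ p−1, and β a primitive p²-th root of unity in the algebraic closure of F_2. If 2 ∈ D_{ℓ₀} for some ℓ₀ with 1 ≤ ℓ₀ ≤ p−1, then D_l(β^n) ≠ 0 for all l ∈ {0,...,p−1} and all integers n with gcd(n,p) = 1. -/
open Finset

noncomputable section

/-- The Fermat quotient `q_p(u)`: for `gcd(u,p)=1` the unique integer in `[0,p-1]`
congruent to `(u^(p-1)-1)/p` mod `p`, and `0` when `p ∣ u`. -/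
def fermatQuot (p u : ℕ) : ℕ :=
  if p ∣ u then 0 else ((u ^ (p - 1) - 1) / p) % p

/-- The polynomial quotient `q_{p,w}(u)`: the unique integer in `[0,p-1]`
congruent to `(u^w - u^(w*p))/p` mod `p`. -/
def polyQuot (p w u : ℕ) : ℤ :=
  (((u : ℤ) ^ w - (u : ℤ) ^ (w * p)) / (p : ℤ)) % (p : ℤ)

/-- The binary sequence `(f_u)`: `f_u = 0` iff the Legendre symbol of `q_{p,w}(u)`
is `1` or `q_{p,w}(u) = 0`. -/
def legSeq (p : ℕ) [Fact p.Prime] (w : ℕ) (u : ℕ) : ZMod 2 :=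
  if legendreSym p (polyQuot p w u) = 1 ∨ polyQuot p w u = 0 then 0 else 1

/-- The linear complexity of a binary sequence: the least order `L` of a linear
recurrence `s_{u+L} = c_{L-1} s_{u+L-1} + ⋯ + c_0 s_u` with `c_0 = 1` satisfied by `s`. -/
def linearComplexity (s : ℕ → ZMod 2) : ℕ :=
  sInf {L : ℕ | ∃ c : Fin L → ZMod 2,
    (∀ h : 0 < L, c ⟨0, h⟩ = 1) ∧
    ∀ u : ℕ, s (u + L) = ∑ i : Fin L, c i * s (u + (i : ℕ))}

/-- The map `H_w : u ↦ -w q_p(u) mod p` for `gcd(u,p)=1`, `0` if `p ∣ u` and `w ≥ 2`,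
and `k mod p` if `u ≡ kp (mod p²)` and `w = 1`. -/
def Hquot (p w u : ℕ) : ZMod p :=
  if p ∣ u then (if w = 1 then ((u / p : ℕ) : ZMod p) else 0)
  else -(w : ZMod p) * ((fermatQuot p u : ℕ) : ZMod p)

/-- `D_l = {u : 0 ≤ u < p², gcd(u,p) = 1, H_w(u) ≡ l (mod p)}`. -/
def Dset (p w : ℕ) (l : ZMod p) : Finset ℕ :=
  (Finset.range (p ^ 2)).filter fun u => Nat.Coprime u p ∧ Hquot p w u = l

/-- `Q_l = {u ∈ D_l : (u/p) = 1}`. -/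
def Qset (p : ℕ) [Fact p.Prime] (w : ℕ) (l : ZMod p) : Finset ℕ :=
  (Dset p w l).filter fun u => legendreSym p u = 1

/-- `N_l = {u ∈ D_l : (u/p) = -1}`. -/
def Nset (p : ℕ) [Fact p.Prime] (w : ℕ) (l : ZMod p) : Finset ℕ :=
  (Dset p w l).filter fun u => legendreSym p u = -1

/-- The quadratic residues modulo `p` in `{1,…,p-1}`. -/
def QRes (p : ℕ) [Fact p.Prime] : Finset ℕ :=
  (Finset.Ico 1 p).filter fun l => legendreSym p l = 1

/-- The quadratic non-residues modulo `p` in `{1,…,p-1}`. -/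
def QNR (p : ℕ) [Fact p.Prime] : Finset ℕ :=
  (Finset.Ico 1 p).filter fun l => legendreSym p l = -1

/-- Evaluation of `G^odd(x) = Σ_{l∈N} D_l(x) + Σ_{l=1}^{p-1} N_l(x)` at a point of the
algebraic closure of `F_2`. -/
def GoddEval (p : ℕ) [Fact p.Prime] (w : ℕ) (x : AlgebraicClosure (ZMod 2)) :
    AlgebraicClosure (ZMod 2) :=
  (∑ l ∈ QNR p, ∑ u ∈ Dset p w (l : ZMod p), x ^ u)
    + ∑ l ∈ Finset.Ico 1 p, ∑ u ∈ Nset p w (l : ZMod p), x ^ u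

/-- Evaluation of `G^one(x) = Σ_{l∈N} D_l(x) + Σ_{l=1}^{p-1} N_l(x) + Σ_{l∈N} x^{lp}`. -/
def GoneEval (p : ℕ) [Fact p.Prime] (w : ℕ) (x : AlgebraicClosure (ZMod 2)) :
    AlgebraicClosure (ZMod 2) :=
  GoddEval p w x + ∑ l ∈ QNR p, x ^ (l * p)

-- AUX1

section Aux
set_option linter.unusedSectionVars false
variable {p : ℕ} [hp : Fact p.Prime]

lemma aux_pow_add_sq {R : Type*} [CommRing R] (a x : R) (h : x * x = 0) (n : ℕ) :
    (a + x) ^ (n + 1) = a ^ (n + 1) + (n + 1 : ℕ) * a ^ n * x := by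
  induction n with
  | zero => push_cast; ring
  | succ n ih =>
    rw [pow_succ, ih]
    push_cast
    linear_combination ((n : R) + 1) * a ^ n * h

omit hp in
lemma aux_pp_zero : ((p : ZMod (p ^ 2))) * p = 0 := by
  have : ((p * p : ℕ) : ZMod (p ^ 2)) = 0 := by rw [← pow_two]; exact ZMod.natCast_self _
  push_cast at this; exact this

lemma fq_spec (u : ℕ) (hu : ¬ p ∣ u) :
    ((u : ZMod (p ^ 2))) ^ (p - 1) = 1 + (p : ZMod (p ^ 2)) * (fermatQuot p u : ℕ) := by
  have hu0 : u ≠ 0 := by rintro rfl; exact hu (dvd_zero p)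
  have h1 : 1 ≤ u ^ (p - 1) := Nat.one_le_iff_ne_zero.2 (pow_ne_zero _ hu0)
  obtain ⟨K, hK⟩ : ∃ K, u ^ (p - 1) = K + 1 := ⟨u ^ (p - 1) - 1, by omega⟩
  have hpK : p ∣ K := by
    have h2 : ((K : ℕ) : ZMod p) = 0 := by
      have h3 : ((u : ZMod p)) ^ (p - 1) = 1 :=
        ZMod.pow_card_sub_one_eq_one (by simpa using (ZMod.natCast_eq_zero_iff u p).not.2 hu)
      have h4 : ((K + 1 : ℕ) : ZMod p) = 1 := by rw [← hK]; push_cast; rw [h3]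
      push_cast at h4
      linear_combination h4
    exact (ZMod.natCast_eq_zero_iff K p).1 h2
  obtain ⟨B, r, hBr, hr⟩ : ∃ B r, K / p = p * B + r ∧ fermatQuot p u = r := by
    refine ⟨K / p / p, K / p % p, (Nat.div_add_mod _ _).symm, ?_⟩
    rw [fermatQuot, if_neg hu]
    congr 2
    omega
  have e2 : p * (K / p) = K := Nat.mul_div_cancel' hpK
  have e3 : u ^ (p - 1) = p * p * B + p * r + 1 := by
    rw [hK, ← e2, hBr]; ring
  rw [hr]
  calc ((u : ZMod (p ^ 2))) ^ (p - 1) = ((u ^ (p - 1) : ℕ) : ZMod (p ^ 2)) := by push_cast; ring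
  _ = _ := by
    rw [e3]
    push_cast
    linear_combination (B : ZMod (p ^ 2)) * aux_pp_zero

lemma pcancel (A B : ℕ) (h : (p : ZMod (p ^ 2)) * A = (p : ZMod (p ^ 2)) * B) :
    ((A : ℕ) : ZMod p) = B := by
  have h' : (p * A) ≡ (p * B) [MOD p ^ 2] := by
    rw [← ZMod.natCast_eq_natCast_iff]; push_cast; exact h
  rw [pow_two] at h'
  exact (ZMod.natCast_eq_natCast_iff _ _ _).2 (Nat.ModEq.mul_left_cancel' hp.out.ne_zero h')

lemma aux_dvd_of_dvd_mod {x : ℕ} (h : p ∣ x % p ^ 2) : p ∣ x := by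
  have h1 : p ∣ p ^ 2 * (x / p ^ 2) := (dvd_pow_self p two_ne_zero).mul_right _
  have h2 := Nat.div_add_mod x (p ^ 2)
  rw [← h2]
  exact Nat.dvd_add h1 h

lemma fq_mul (u v : ℕ) (hu : ¬ p ∣ u) (hv : ¬ p ∣ v) :
    ((fermatQuot p (u * v % p ^ 2) : ℕ) : ZMod p)
      = ((fermatQuot p u : ℕ) : ZMod p) + ((fermatQuot p v : ℕ) : ZMod p) := by
  have huv : ¬ p ∣ u * v % p ^ 2 := by
    intro hd
    rcases hp.out.dvd_mul.1 (aux_dvd_of_dvd_mod hd) with h | h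
    exacts [hu h, hv h]
  have h1 := fq_spec u hu
  have h2 := fq_spec v hv
  have h3 := fq_spec (u * v % p ^ 2) huv
  have hcast : (((u * v % p ^ 2 : ℕ)) : ZMod (p ^ 2)) = (u : ZMod (p ^ 2)) * v := by
    rw [ZMod.natCast_mod]  -- check name
    push_cast; ring
  rw [hcast, mul_pow, h1, h2] at h3
  have key : (p : ZMod (p ^ 2)) * (fermatQuot p (u * v % p ^ 2) : ℕ)
      = (p : ZMod (p ^ 2)) * ((fermatQuot p u + fermatQuot p v : ℕ) : ℕ) := by
    push_cast
    linear_combination -h3 + ((fermatQuot p u : ZMod (p ^ 2)) * (fermatQuot p v : ZMod (p ^ 2))) * aux_pp_zero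
  have := pcancel _ _ key
  rw [this]; push_cast; ring

end Aux

-- AUX2

section Aux2
set_option linter.unusedSectionVars false
variable {p : ℕ} [hp : Fact p.Prime]







lemma Hquot_of_not_dvd {w u : ℕ} (hu : ¬ p ∣ u) :
    Hquot p w u = -(w : ZMod p) * ((fermatQuot p u : ℕ) : ZMod p) := if_neg hu

lemma not_dvd_one {p : ℕ} (hp : Fact p.Prime) : ¬ p ∣ 1 :=
  fun h => hp.out.ne_one (Nat.dvd_one.1 h)

lemma Hquot_one (w : ℕ) : Hquot p w 1 = 0 := by
  rw [Hquot_of_not_dvd (not_dvd_one hp)]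
  have : fermatQuot p 1 = 0 := by simp [fermatQuot, not_dvd_one hp]
  rw [this]; simp

lemma Hquot_mul (w u v : ℕ) (hu : ¬ p ∣ u) (hv : ¬ p ∣ v) :
    Hquot p w (u * v % p ^ 2) = Hquot p w u + Hquot p w v := by
  have huv : ¬ p ∣ u * v % p ^ 2 := by
    intro hd
    rcases hp.out.dvd_mul.1 (aux_dvd_of_dvd_mod hd) with h | h
    exacts [hu h, hv h]
  rw [Hquot_of_not_dvd hu, Hquot_of_not_dvd hv, Hquot_of_not_dvd huv, fq_mul u v hu hv]
  ring

lemma not_dvd_one_add (t : ℕ) : ¬ p ∣ 1 + t * p := by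
  intro h
  have h2 : p ∣ t * p := dvd_mul_left p t
  exact not_dvd_one hp ((Nat.dvd_add_right h2).mp (by rwa [Nat.add_comm] at h))

lemma fq_one_add (t : ℕ) :
    ((fermatQuot p (1 + t * p) : ℕ) : ZMod p) = - (t : ZMod p) := by
  have hnd := not_dvd_one_add (p := p) t
  have hspec := fq_spec (1 + t * p) hnd
  have hx : ((t * p : ℕ) : ZMod (p ^ 2)) * ((t * p : ℕ) : ZMod (p ^ 2)) = 0 := by
    push_cast
    linear_combination ((t : ZMod (p ^ 2)) * t) * aux_pp_zero (p := p)
  have hexp : p - 1 = (p - 2) + 1 := by have := hp.out.two_le; omega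
  have h2 := aux_pow_add_sq (1 : ZMod (p ^ 2)) (((t * p : ℕ) : ZMod (p ^ 2))) hx (p - 2)
  rw [hexp] at hspec
  have hc : ((1 + t * p : ℕ) : ZMod (p ^ 2)) = 1 + ((t * p : ℕ) : ZMod (p ^ 2)) := by push_cast; ring
  rw [hc, h2] at hspec
  simp only [one_pow] at hspec
  push_cast at hspec
  -- hspec : 1 ^ (p-2+1) + (p-2+1) * 1 ^ (p-2) * (t*p) = 1 + p * Q
  have key : (p : ZMod (p ^ 2)) * (((p - 2 + 1) * t : ℕ) : ℕ)
      = (p : ZMod (p ^ 2)) * (fermatQuot p (1 + t * p) : ℕ) := by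
    push_cast
    linear_combination hspec
  have h5 := (pcancel _ _ key).symm
  rw [h5, ← hexp]
  push_cast [Nat.cast_sub hp.out.one_le]
  rw [ZMod.natCast_self]
  ring

lemma Hquot_one_add (w t : ℕ) : Hquot p w (1 + t * p) = (w : ZMod p) * t := by
  rw [Hquot_of_not_dvd (not_dvd_one_add t), fq_one_add]
  ring

lemma exists_shift (w : ℕ) (hw : ¬ p ∣ w) (h : ZMod p) :
    ∃ t : ℕ, Hquot p w (1 + t * p) = h := by
  haveI : NeZero p := ⟨hp.out.ne_zero⟩
  have hw' : (w : ZMod p) ≠ 0 := by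
    simpa using (ZMod.natCast_eq_zero_iff w p).not.2 hw
  refine ⟨((w : ZMod p)⁻¹ * h).val, ?_⟩
  rw [Hquot_one_add, ZMod.natCast_val, ZMod.cast_id, ← mul_assoc,
    mul_inv_cancel₀ hw', one_mul]

lemma mem_Dset {w u : ℕ} {l : ZMod p} :
    u ∈ Dset p w l ↔ u < p ^ 2 ∧ ¬ p ∣ u ∧ Hquot p w u = l := by
  rw [Dset, Finset.mem_filter, Finset.mem_range, Nat.coprime_comm, hp.out.coprime_iff_not_dvd]

omit hp in
lemma pow_mod_eq {M : Type*} [Monoid M] (x : M) (d : ℕ) (hx : x ^ d = 1) (a : ℕ) :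
    x ^ a = x ^ (a % d) := by
  conv_lhs => rw [← Nat.div_add_mod a d]
  rw [pow_add, pow_mul, hx, one_pow, one_mul]

lemma sum_shift {F : Type*} [Field F] (ζ : F) (hζ : ζ ^ (p ^ 2) = 1)
    (w m : ℕ) (hm : ¬ p ∣ m) (l : ZMod p) :
    ∑ u ∈ Dset p w l, ζ ^ (m * u) = ∑ v ∈ Dset p w (l + Hquot p w m), ζ ^ v := by
  have hp2 : 0 < p ^ 2 := pow_pos hp.out.pos 2
  have hcop : m.Coprime (p ^ 2) := ((hp.out.coprime_iff_not_dvd.2 hm).symm).pow_right 2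
  set A : (ZMod (p ^ 2))ˣ := ZMod.unitOfCoprime m hcop with hA
  set m' : ℕ := ((A⁻¹ : (ZMod (p ^ 2))ˣ) : ZMod (p ^ 2)).val with hm'def
  haveI : NeZero (p ^ 2) := ⟨hp2.ne'⟩
  have hm'cop : m'.Coprime (p ^ 2) := ZMod.val_coe_unit_coprime A⁻¹
  have hm'nd : ¬ p ∣ m' := by
    have h1 : m'.Coprime p := hm'cop.coprime_dvd_right (dvd_pow_self p two_ne_zero)
    exact hp.out.coprime_iff_not_dvd.1 h1.symm
  have hmm : (m * m') % p ^ 2 = 1 := by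
    have h1 : ((m * m' : ℕ) : ZMod (p ^ 2)) = ((1 : ℕ) : ZMod (p ^ 2)) := by
      push_cast
      rw [hm'def, ZMod.natCast_val, ZMod.cast_id]
      calc (m : ZMod (p ^ 2)) * ((A⁻¹ : (ZMod (p ^ 2))ˣ) : ZMod (p ^ 2))
          = ((A : (ZMod (p ^ 2))ˣ) : ZMod (p ^ 2)) * ((A⁻¹ : (ZMod (p ^ 2))ˣ) : ZMod (p ^ 2)) := by
            rw [hA, ZMod.coe_unitOfCoprime]
        _ = 1 := by rw [← Units.val_mul, mul_inv_cancel, Units.val_one]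
    have h2 : (m * m') % p ^ 2 = 1 % p ^ 2 := (ZMod.natCast_eq_natCast_iff _ _ _).1 h1
    have h1lt : (1 : ℕ) < p ^ 2 := by nlinarith [hp.out.two_le]
    rwa [Nat.mod_eq_of_lt h1lt] at h2
  have hm'm : (m' * m) % p ^ 2 = 1 := by rwa [Nat.mul_comm]
  have emod : ∀ a b : ℕ, (a * (b % p ^ 2)) % p ^ 2 = (a * b) % p ^ 2 := fun a b =>
    (Nat.ModEq.mul_left a (Nat.mod_modEq b (p ^ 2)) : _)
  have emod2 : ∀ a b : ℕ, ((a % p ^ 2) * b) % p ^ 2 = (a * b) % p ^ 2 := fun a b =>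
    (Nat.ModEq.mul_right b (Nat.mod_modEq a (p ^ 2)) : _)
  refine Finset.sum_nbij' (fun u => (m * u) % p ^ 2) (fun v => (m' * v) % p ^ 2) ?_ ?_ ?_ ?_ ?_
  · intro u hu
    obtain ⟨hlt, hnd, hH⟩ := mem_Dset.1 hu
    refine mem_Dset.2 ⟨Nat.mod_lt _ hp2, ?_, ?_⟩
    · intro hd
      rcases hp.out.dvd_mul.1 (aux_dvd_of_dvd_mod hd) with h | h
      exacts [hm h, hnd h]
    · rw [Hquot_mul w m u hm hnd, hH]; ring
  · intro v hv
    obtain ⟨hlt, hnd, hH⟩ := mem_Dset.1 hv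
    refine mem_Dset.2 ⟨Nat.mod_lt _ hp2, ?_, ?_⟩
    · intro hd
      rcases hp.out.dvd_mul.1 (aux_dvd_of_dvd_mod hd) with h | h
      exacts [hm'nd h, hnd h]
    · rw [Hquot_mul w m' v hm'nd hnd, hH]
      have hsum : Hquot p w m + Hquot p w m' = 0 := by
        rw [← Hquot_mul w m m' hm hm'nd, hmm, Hquot_one]
      linear_combination hsum
  · intro u hu
    obtain ⟨hlt, -, -⟩ := mem_Dset.1 hu
    show m' * (m * u % p ^ 2) % p ^ 2 = u
    rw [emod, show m' * (m * u) = (m' * m) * u by ring, ← emod2, hm'm, one_mul,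
      Nat.mod_eq_of_lt hlt]
  · intro v hv
    obtain ⟨hlt, -, -⟩ := mem_Dset.1 hv
    show m * (m' * v % p ^ 2) % p ^ 2 = v
    rw [emod, show m * (m' * v) = (m * m') * v by ring, ← emod2, hmm, one_mul,
      Nat.mod_eq_of_lt hlt]
  · intro u hu
    exact pow_mod_eq ζ _ hζ _
end Aux2


/-- Lemma: if `2 ∈ D_{ℓ₀}` with `1 ≤ ℓ₀ ≤ p-1`, then `D_l(β^n) ≠ 0` for all `l` and all
integers `n` coprime to `p`. -/
theorem Dset_eval_ne_zero (p : ℕ) [hp : Fact p.Prime] (hodd : p ≠ 2)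
    (w : ℕ) (hw1 : 1 ≤ w) (hw2 : w ≤ p - 1)
    (β : AlgebraicClosure (ZMod 2)) (hβ : IsPrimitiveRoot β (p ^ 2))
    (ℓ₀ : ℕ) (hℓ₀1 : 1 ≤ ℓ₀) (hℓ₀2 : ℓ₀ ≤ p - 1) (h2 : 2 ∈ Dset p w (ℓ₀ : ZMod p)) :
    ∀ l : ℕ, l ≤ p - 1 → ∀ n : ℤ, Int.gcd n p = 1 →
      ∑ u ∈ Dset p w (l : ZMod p), (β ^ n) ^ u ≠ 0 := by
  intro l hl n hn hzero
  haveI : NeZero p := ⟨hp.out.ne_zero⟩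
  have hp2 : 0 < p ^ 2 := pow_pos hp.out.pos 2
  have hβ1 : β ^ (p ^ 2) = 1 := hβ.pow_eq_one
  have hβ0 : β ≠ 0 := by
    intro h
    rw [h, zero_pow hp2.ne'] at hβ1
    exact zero_ne_one hβ1
  set N : ℕ := (n % ((p : ℤ) ^ 2)).toNat with hNdef
  have hNcast : (N : ℤ) = n % ((p : ℤ) ^ 2) :=
    Int.toNat_of_nonneg (Int.emod_nonneg n (by exact_mod_cast hp2.ne'))
  have hsplitn : n = ((p : ℤ) ^ 2) * (n / ((p : ℤ) ^ 2)) + (N : ℤ) := by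
    rw [hNcast]; exact (Int.mul_ediv_add_emod _ _).symm
  have hβp2z : β ^ ((p : ℤ) ^ 2) = 1 := by
    rw [show ((p : ℤ) ^ 2) = ((p ^ 2 : ℕ) : ℤ) by push_cast; ring, zpow_natCast, hβ1]
  have hβN : β ^ n = β ^ N := by
    calc β ^ n = β ^ (((p : ℤ) ^ 2) * (n / ((p : ℤ) ^ 2)) + (N : ℤ)) := by rw [← hsplitn]
    _ = (β ^ ((p : ℤ) ^ 2)) ^ (n / ((p : ℤ) ^ 2)) * β ^ ((N : ℕ) : ℤ) := by
        rw [zpow_add₀ hβ0, zpow_mul]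
    _ = β ^ N := by rw [hβp2z, one_zpow, one_mul, zpow_natCast]
  have hNnd : ¬ p ∣ N := by
    intro hd
    have h1 : (p : ℤ) ∣ (N : ℤ) := Int.natCast_dvd_natCast.2 hd
    have h3 : (p : ℤ) ∣ ((p : ℤ) ^ 2) * (n / ((p : ℤ) ^ 2)) :=
      (dvd_pow_self _ two_ne_zero).mul_right _
    have h4 : (p : ℤ) ∣ n := by rw [hsplitn]; exact dvd_add h3 h1
    have h5 : (p : ℤ) ∣ ((Int.gcd n p : ℕ) : ℤ) := Int.dvd_coe_gcd h4 dvd_rfl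
    rw [hn] at h5
    have h6 : (p : ℤ) = 1 := Int.eq_one_of_dvd_one (by positivity) (by exact_mod_cast h5)
    have h7 : p = 1 := by exact_mod_cast h6
    exact hp.out.ne_one h7
  set ζ : AlgebraicClosure (ZMod 2) := β ^ N with hζdef
  have hζ1 : ζ ^ (p ^ 2) = 1 := by rw [hζdef, ← pow_mul, mul_comm, pow_mul, hβ1, one_pow]
  have hzero' : ∑ u ∈ Dset p w ((l : ℕ) : ZMod p), ζ ^ u = 0 := by
    rw [← hzero]
    exact Finset.sum_congr rfl fun u _ => by rw [hβN]
  obtain ⟨-, h2nd, h2H⟩ := mem_Dset.1 h2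
  have hlt₀ : ℓ₀ < p := by have := hp.out.two_le; omega
  have hl₀ne : ((ℓ₀ : ℕ) : ZMod p) ≠ 0 := by
    intro h
    have hdvd := (ZMod.natCast_eq_zero_iff ℓ₀ p).1 h
    have := Nat.le_of_dvd (by omega) hdvd
    omega
  have sqstep : ∀ l' : ZMod p, (∑ u ∈ Dset p w l', ζ ^ u) ^ 2
      = ∑ v ∈ Dset p w (l' + ((ℓ₀ : ℕ) : ZMod p)), ζ ^ v := by
    intro l'
    calc (∑ u ∈ Dset p w l', ζ ^ u) ^ 2 = ∑ u ∈ Dset p w l', (ζ ^ u) ^ 2 :=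
        sum_pow_char 2 _ _
    _ = ∑ u ∈ Dset p w l', ζ ^ (2 * u) :=
        Finset.sum_congr rfl fun u _ => by rw [← pow_mul, mul_comm]
    _ = _ := by rw [sum_shift ζ hζ1 w 2 h2nd l', h2H]
  have stepA : ∀ l' : ZMod p, ∑ u ∈ Dset p w l', ζ ^ u = 0 := by
    have hk : ∀ k : ℕ,
        ∑ u ∈ Dset p w (((l : ℕ) : ZMod p) + (k : ℕ) * ((ℓ₀ : ℕ) : ZMod p)), ζ ^ u = 0 := by
      intro k
      induction k with
      | zero => simpa using hzero'
      | succ k ih =>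
        have h3 := sqstep (((l : ℕ) : ZMod p) + (k : ℕ) * ((ℓ₀ : ℕ) : ZMod p))
        rw [ih] at h3
        have h4 : ((((l : ℕ) : ZMod p) + (k : ℕ) * ((ℓ₀ : ℕ) : ZMod p)) + ((ℓ₀ : ℕ) : ZMod p))
            = ((l : ℕ) : ZMod p) + ((k + 1 : ℕ) : ZMod p) * ((ℓ₀ : ℕ) : ZMod p) := by
          push_cast; ring
        rw [h4] at h3
        rw [← h3]
        norm_num
    intro l'
    have hkval : ((((l' - ((l : ℕ) : ZMod p)) * (((ℓ₀ : ℕ) : ZMod p))⁻¹).val : ℕ) : ZMod p)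
        = (l' - ((l : ℕ) : ZMod p)) * (((ℓ₀ : ℕ) : ZMod p))⁻¹ := by
      rw [ZMod.natCast_val, ZMod.cast_id]
    have h6 := hk ((l' - ((l : ℕ) : ZMod p)) * (((ℓ₀ : ℕ) : ZMod p))⁻¹).val
    rw [hkval] at h6
    have h5 : ((l : ℕ) : ZMod p)
        + (l' - ((l : ℕ) : ZMod p)) * (((ℓ₀ : ℕ) : ZMod p))⁻¹ * ((ℓ₀ : ℕ) : ZMod p) = l' := by
      rw [mul_assoc, inv_mul_cancel₀ hl₀ne, mul_one]; ring
    rw [h5] at h6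
    exact h6
  have hwnd : ¬ p ∣ w := by
    intro h
    have h1 := Nat.le_of_dvd (by omega) h
    have := hp.out.two_le
    omega
  have stepB : ∀ (l' : ZMod p) (M : ℕ), ¬ p ∣ M → ∑ u ∈ Dset p w l', (β ^ M) ^ u = 0 := by
    intro l' M hM
    have hMcop : M.Coprime (p ^ 2) := ((hp.out.coprime_iff_not_dvd.2 hM).symm).pow_right 2
    have hNcop : N.Coprime (p ^ 2) := ((hp.out.coprime_iff_not_dvd.2 hNnd).symm).pow_right 2
    haveI : NeZero (p ^ 2) := ⟨hp2.ne'⟩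
    set A := ZMod.unitOfCoprime N hNcop with hA
    set Bu := ZMod.unitOfCoprime M hMcop with hBu
    set m : ℕ := ((A⁻¹ * Bu : (ZMod (p ^ 2))ˣ) : ZMod (p ^ 2)).val with hmdef
    have hmcop : m.Coprime (p ^ 2) := ZMod.val_coe_unit_coprime _
    have hmnd : ¬ p ∣ m :=
      hp.out.coprime_iff_not_dvd.1 (hmcop.coprime_dvd_right (dvd_pow_self p two_ne_zero)).symm
    have hNm : (N * m) % p ^ 2 = M % p ^ 2 := by
      have h1 : ((N * m : ℕ) : ZMod (p ^ 2)) = ((M : ℕ) : ZMod (p ^ 2)) := by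
        push_cast
        rw [hmdef, ZMod.natCast_val, ZMod.cast_id]
        calc (N : ZMod (p ^ 2)) * ((A⁻¹ * Bu : (ZMod (p ^ 2))ˣ) : ZMod (p ^ 2))
            = ((A : (ZMod (p ^ 2))ˣ) : ZMod (p ^ 2))
              * ((A⁻¹ * Bu : (ZMod (p ^ 2))ˣ) : ZMod (p ^ 2)) := by
              rw [hA, ZMod.coe_unitOfCoprime]
          _ = ((A * (A⁻¹ * Bu) : (ZMod (p ^ 2))ˣ) : ZMod (p ^ 2)) := by simp
          _ = ((Bu : (ZMod (p ^ 2))ˣ) : ZMod (p ^ 2)) := by rw [mul_inv_cancel_left]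
          _ = (M : ZMod (p ^ 2)) := by rw [hBu, ZMod.coe_unitOfCoprime]
      exact (ZMod.natCast_eq_natCast_iff _ _ _).1 h1
    have hpowM : β ^ M = ζ ^ m := by
      rw [hζdef, ← pow_mul, pow_mod_eq β (p ^ 2) hβ1 M, pow_mod_eq β (p ^ 2) hβ1 (N * m), hNm]
    have h6 : ∀ u : ℕ, (β ^ M) ^ u = ζ ^ (m * u) := fun u => by rw [hpowM, ← pow_mul]
    rw [Finset.sum_congr rfl fun u _ => h6 u, sum_shift ζ hζ1 w m hmnd l']
    exact stepA _
  have h1mem : (1 : ℕ) ∈ Dset p w ((0 : ZMod p)) :=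
    mem_Dset.2 ⟨by nlinarith [hp.out.two_le], not_dvd_one hp, Hquot_one w⟩
  have h1not : (1 : ℕ) ∉ Dset p w ((ℓ₀ : ℕ) : ZMod p) := by
    intro h
    obtain ⟨-, -, hH⟩ := mem_Dset.1 h
    rw [Hquot_one w] at hH
    exact hl₀ne hH.symm
  have hT : ∀ l' : ZMod p,
      ∑ n' ∈ Finset.range (p ^ 2), ∑ u ∈ Dset p w l', β ^ (n' * (u + (p ^ 2 - 1)))
        = (if (1 : ℕ) ∈ Dset p w l' then (1 : AlgebraicClosure (ZMod 2)) else 0) := by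
    intro l'
    rw [Finset.sum_comm]
    have hinner : ∀ u ∈ Dset p w l',
        (∑ n' ∈ Finset.range (p ^ 2), β ^ (n' * (u + (p ^ 2 - 1))))
          = if u = 1 then (1 : AlgebraicClosure (ZMod 2)) else 0 := by
      intro u hu
      obtain ⟨hult, hund, -⟩ := mem_Dset.1 hu
      have hu1 : 1 ≤ u := by
        rcases Nat.eq_zero_or_pos u with h | h
        · exact absurd (h ▸ dvd_zero p) hund
        · exact h
      have hsummand : ∀ n' : ℕ,
          β ^ (n' * (u + (p ^ 2 - 1))) = (β ^ (u + (p ^ 2 - 1))) ^ n' := fun n' => by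
        rw [← pow_mul, mul_comm]
      rw [Finset.sum_congr rfl fun n' _ => hsummand n']
      by_cases h1 : u = 1
      · subst h1
        rw [if_pos rfl]
        have he : 1 + (p ^ 2 - 1) = p ^ 2 := by omega
        rw [he, hβ1]
        simp only [one_pow]
        rw [Finset.sum_const, Finset.card_range, nsmul_eq_mul, mul_one]
        obtain ⟨k, hk⟩ : Odd (p ^ 2) := (hp.out.odd_of_ne_two hodd).pow
        have h2c : ((2 : ℕ) : AlgebraicClosure (ZMod 2)) = 0 := by
          exact_mod_cast CharP.cast_eq_zero (AlgebraicClosure (ZMod 2)) 2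
        rw [hk]; push_cast at h2c ⊢; rw [h2c]; ring
      · rw [if_neg h1]
        have hξ1 : (β ^ (u + (p ^ 2 - 1))) ^ (p ^ 2) = 1 := by
          rw [← pow_mul, mul_comm, pow_mul, hβ1, one_pow]
        have hξne : β ^ (u + (p ^ 2 - 1)) ≠ 1 := by
          intro h
          obtain ⟨c, hc⟩ := (hβ.pow_eq_one_iff_dvd _).1 h
          rcases Nat.lt_or_ge c 2 with hh | hh
          · interval_cases c <;> omega
          · have h5 : p ^ 2 * 2 ≤ p ^ 2 * c := Nat.mul_le_mul_left _ hh
            omega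
        have hgeom := geom_sum_mul (β ^ (u + (p ^ 2 - 1))) (p ^ 2)
        rw [hξ1, sub_self] at hgeom
        rcases mul_eq_zero.1 hgeom with h | h
        · exact h
        · exact absurd (sub_eq_zero.1 h) hξne
    rw [Finset.sum_congr rfl hinner,
      Finset.sum_ite_eq' (Dset p w l') 1 (fun _ => (1 : AlgebraicClosure (ZMod 2)))]
  have hTsplit : ∀ l' : ZMod p,
      ∑ n' ∈ Finset.range (p ^ 2), ∑ u ∈ Dset p w l', β ^ (n' * (u + (p ^ 2 - 1)))
        = ∑ n' ∈ (Finset.range (p ^ 2)).filter (p ∣ ·),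
            ∑ u ∈ Dset p w l', β ^ (n' * (u + (p ^ 2 - 1))) := by
    intro l'
    rw [← Finset.sum_filter_add_sum_filter_not (Finset.range (p ^ 2)) (p ∣ ·)]
    have hz : ∀ n' ∈ (Finset.range (p ^ 2)).filter (fun n' => ¬ p ∣ n'),
        ∑ u ∈ Dset p w l', β ^ (n' * (u + (p ^ 2 - 1))) = 0 := by
      intro n' hn'
      have hnd := (Finset.mem_filter.1 hn').2
      have hfac : ∀ u : ℕ,
          β ^ (n' * (u + (p ^ 2 - 1))) = (β ^ n') ^ u * β ^ (n' * (p ^ 2 - 1)) := fun u => by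
        rw [← pow_mul, ← pow_add]; congr 1; ring
      rw [Finset.sum_congr rfl fun u _ => hfac u, ← Finset.sum_mul, stepB l' n' hnd, zero_mul]
    rw [Finset.sum_eq_zero hz, add_zero]
  have hmult : ∀ n', p ∣ n' →
      ∑ u ∈ Dset p w ((0 : ZMod p)), β ^ (n' * (u + (p ^ 2 - 1)))
        = ∑ u ∈ Dset p w (((ℓ₀ : ℕ) : ZMod p)), β ^ (n' * (u + (p ^ 2 - 1))) := by
    intro n' hdvd
    obtain ⟨k, rfl⟩ := hdvd
    have hfac : ∀ u : ℕ,
        β ^ ((p * k) * (u + (p ^ 2 - 1)))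
          = (β ^ (p * k)) ^ u * β ^ ((p * k) * (p ^ 2 - 1)) := fun u => by
      rw [← pow_mul, ← pow_add]; congr 1; ring
    rw [Finset.sum_congr rfl fun u _ => hfac u, Finset.sum_congr rfl fun u _ => hfac u,
      ← Finset.sum_mul, ← Finset.sum_mul]
    congr 1
    set ξ := β ^ (p * k) with hξdef
    have hξp : ξ ^ p = 1 := by
      rw [hξdef, ← pow_mul, show p * k * p = p ^ 2 * k by ring, pow_mul, hβ1, one_pow]
    have hξ2 : ξ ^ (p ^ 2) = 1 := by rw [show p ^ 2 = p * p by ring, pow_mul, hξp, one_pow]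
    obtain ⟨t, ht⟩ := exists_shift w hwnd ((((ℓ₀ : ℕ) : ZMod p)) - 0)
    have hss := sum_shift ξ hξ2 w (1 + t * p) (not_dvd_one_add t) (0 : ZMod p)
    rw [ht, show (0 : ZMod p) + ((((ℓ₀ : ℕ) : ZMod p)) - 0) = (((ℓ₀ : ℕ) : ZMod p)) by ring]
      at hss
    rw [← hss]
    refine Finset.sum_congr rfl fun u _ => ?_
    exact (by rw [show (1 + t * p) * u = u + p * (t * u) by ring, pow_add, pow_mul, hξp,
      one_pow, mul_one] : ξ ^ ((1 + t * p) * u) = ξ ^ u).symm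
  have hfinal : (if (1 : ℕ) ∈ Dset p w ((0 : ZMod p)) then (1 : AlgebraicClosure (ZMod 2)) else 0)
      = (if (1 : ℕ) ∈ Dset p w (((ℓ₀ : ℕ) : ZMod p)) then (1 : AlgebraicClosure (ZMod 2)) else 0) := by
    rw [← hT, ← hT, hTsplit, hTsplit]
    exact Finset.sum_congr rfl fun n' hn' => hmult n' (Finset.mem_filter.1 hn').2
  rw [if_pos h1mem, if_neg h1not] at hfinal
  exact one_ne_zero hfinal
end
end

section
/- Let p be an odd prime, w an integer with 1 ≤ w ≤ p−1, and β a primitive p²-th root of unity in the algebraic closure of F_2. Then G^one(β^0) equals the image of the integer (p−1)/2 in F_2, and G^one(β^{kp}) = 0 for every k = 1, ..., p−1. -/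
open Finset

noncomputable section

section AuxLemmas

variable {p : ℕ} [hp : Fact p.Prime]

private lemma p_pos : 0 < p := hp.out.pos

/-- Integer Fermat quotient. -/
private def Mq (p u : ℕ) : ℤ := ((u : ℤ) ^ (p - 1) - 1) / p

private lemma dvd_pow_sub_one {u : ℕ} (hu : ¬ p ∣ u) : (p : ℤ) ∣ (u : ℤ) ^ (p - 1) - 1 := by
  have h0 : ((u : ℕ) : ZMod p) ≠ 0 := by
    rw [Ne, ZMod.natCast_eq_zero_iff]; exact hu
  rw [← ZMod.intCast_zmod_eq_zero_iff_dvd]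
  push_cast
  rw [ZMod.pow_card_sub_one_eq_one h0, sub_self]

private lemma sq_dvd_aux (a b : ℤ) : ∀ n : ℕ, b ^ 2 ∣ (a + b) ^ (n + 1) - a ^ (n + 1) - (n + 1) * a ^ n * b := by
  intro n
  induction n with
  | zero => exact ⟨0, by push_cast; ring⟩
  | succ n ih =>
    obtain ⟨c, hc⟩ := ih
    refine ⟨(a + b) * c + (n + 1) * a ^ n, ?_⟩
    have : (a + b) ^ (n + 1 + 1) = (a + b) * (a + b) ^ (n + 1) := by ring
    push_cast
    linear_combination (a + b) * hc

private lemma coprime_add_mul {r t : ℕ} (hr : ¬ p ∣ r) : ¬ p ∣ (r + t * p) := by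
  intro h
  exact hr ((Nat.dvd_add_iff_left (dvd_mul_left p t)).mpr h)

private lemma p_mul_Mq {u : ℕ} (hu : ¬ p ∣ u) : (p : ℤ) * Mq p u = (u : ℤ) ^ (p - 1) - 1 :=
  Int.mul_ediv_cancel' (dvd_pow_sub_one hu)

/-- Key congruence: `Mq (r + t p) ≡ Mq r + (p-1) r^(p-2) t (mod p)`. -/
private lemma Mq_add (r t : ℕ) (hr : ¬ p ∣ r) :
    ((Mq p (r + t * p) : ℤ) : ZMod p)
      = ((Mq p r : ℤ) : ZMod p) + ((p - 1 : ℕ) : ZMod p) * (r : ZMod p) ^ (p - 2) * t := by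
  have hp2 : 2 ≤ p := hp.out.two_le
  have hsub : p - 2 + 1 = p - 1 := by omega
  have h2 : ((t : ℤ) * p) ^ 2 ∣ ((r : ℤ) + t * p) ^ (p - 1) - (r : ℤ) ^ (p - 1)
      - ((p - 1 : ℕ) : ℤ) * (r : ℤ) ^ (p - 2) * ((t : ℤ) * p) := by
    have := sq_dvd_aux (r : ℤ) ((t : ℤ) * p) (p - 2)
    rwa [hsub, show ((p - 2 : ℕ) : ℤ) + 1 = ((p - 1 : ℕ) : ℤ) by omega] at this
  obtain ⟨k, hk⟩ := h2
  have e1 : (p : ℤ) * Mq p (r + t * p) = ((r : ℤ) + t * p) ^ (p - 1) - 1 := by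
    have := p_mul_Mq (coprime_add_mul hr (t := t))
    rwa [show (((r + t * p : ℕ)) : ℤ) = (r : ℤ) + t * p by push_cast; ring] at this
  have e2 : (p : ℤ) * Mq p r = (r : ℤ) ^ (p - 1) - 1 := p_mul_Mq hr
  have hcancel : Mq p (r + t * p)
      = Mq p r + ((p - 1 : ℕ) : ℤ) * (r : ℤ) ^ (p - 2) * t + p * (t ^ 2 * k) := by
    have hpne : (p : ℤ) ≠ 0 := by exact_mod_cast hp.out.pos.ne'
    apply mul_left_cancel₀ hpne
    linear_combination e1 - e2 + hk
  rw [hcancel]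
  push_cast
  simp [ZMod.natCast_self]

private lemma one_le_of_not_dvd {u : ℕ} (hu : ¬ p ∣ u) : 1 ≤ u := by
  rcases Nat.eq_zero_or_pos u with h | h
  · exact absurd (h ▸ dvd_zero p) hu
  · exact h

/-- `Hquot` via the integer Fermat quotient. -/
private lemma Hquot_eq_Mq {w u : ℕ} (hu : ¬ p ∣ u) :
    Hquot p w u = -(w : ZMod p) * ((Mq p u : ℤ) : ZMod p) := by
  have hu1 : 1 ≤ u := one_le_of_not_dvd hu
  have hu1' : 1 ≤ u ^ (p - 1) := Nat.one_le_pow _ _ hu1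
  have hdvd : p ∣ u ^ (p - 1) - 1 := by
    have := dvd_pow_sub_one hu
    have hcast : ((u ^ (p - 1) - 1 : ℕ) : ℤ) = (u : ℤ) ^ (p - 1) - 1 := by
      push_cast [hu1']; ring
    rw [← hcast] at this
    exact_mod_cast this
  obtain ⟨m, hm⟩ := hdvd
  have hdiv : (u ^ (p - 1) - 1) / p = m := by
    rw [hm, Nat.mul_div_cancel_left _ hp.out.pos]
  have hMq : Mq p u = (m : ℤ) := by
    unfold Mq
    have hcast : (u : ℤ) ^ (p - 1) - 1 = ((p : ℕ) : ℤ) * m := by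
      rw [← Nat.cast_mul, ← hm]; push_cast [hu1']; ring
    rw [hcast, Int.mul_ediv_cancel_left _ (by exact_mod_cast hp.out.pos.ne')]
  unfold Hquot fermatQuot
  rw [if_neg hu, if_neg hu, hdiv, hMq]
  simp [ZMod.natCast_mod]

private lemma w_ne_zero {w : ℕ} (hw1 : 1 ≤ w) (hw2 : w ≤ p - 1) : ((w : ZMod p)) ≠ 0 := by
  rw [Ne, ZMod.natCast_eq_zero_iff]
  intro h
  have := Nat.le_of_dvd hw1 h
  omega

private lemma alpha_ne_zero {r : ℕ} (hr : ¬ p ∣ r) :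
    ((p - 1 : ℕ) : ZMod p) * (r : ZMod p) ^ (p - 2) ≠ 0 := by
  have h1 : ((p - 1 : ℕ) : ZMod p) = -1 := by
    have : ((p - 1 : ℕ) : ZMod p) = ((p : ℕ) : ZMod p) - 1 := by
      push_cast [hp.out.one_le]; ring
    rw [this, ZMod.natCast_self, zero_sub]
  have h2 : (r : ZMod p) ≠ 0 := by
    rw [Ne, ZMod.natCast_eq_zero_iff]; exact hr
  rw [h1]
  simp [pow_ne_zero _ h2]

/-- Full formula for `Hquot` on `r + t p`. -/
private lemma Hquot_formula {w : ℕ} (r t : ℕ) (hr : ¬ p ∣ r) :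
    Hquot p w (r + t * p)
      = -(w : ZMod p) * (((Mq p r : ℤ) : ZMod p)
          + ((p - 1 : ℕ) : ZMod p) * (r : ZMod p) ^ (p - 2) * t) := by
  rw [Hquot_eq_Mq (coprime_add_mul hr), Mq_add r t hr]

private lemma not_dvd_of_coprime {u : ℕ} (h : Nat.Coprime u p) : ¬ p ∣ u := by
  intro hd
  have h1 : p ∣ Nat.gcd u p := Nat.dvd_gcd hd dvd_rfl
  rw [Nat.Coprime.gcd_eq_one h] at h1
  exact hp.out.one_lt.ne' (Nat.dvd_one.mp h1)

private lemma mem_Dset_iff {w : ℕ} {l : ZMod p} {u : ℕ} :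
    u ∈ Dset p w l ↔ u < p ^ 2 ∧ Nat.Coprime u p ∧ Hquot p w u = l := by
  unfold Dset
  simp [Finset.mem_filter, Finset.mem_range, and_assoc]

/-- Injectivity of `u ↦ u % p` on `Dset`. -/
private lemma Dset_inj {w : ℕ} (hw1 : 1 ≤ w) (hw2 : w ≤ p - 1) {l : ZMod p}
    {u₁ u₂ : ℕ} (h₁ : u₁ ∈ Dset p w l) (h₂ : u₂ ∈ Dset p w l) (h : u₁ % p = u₂ % p) :
    u₁ = u₂ := by
  rw [mem_Dset_iff] at h₁ h₂
  obtain ⟨hu₁lt, hu₁c, hu₁H⟩ := h₁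
  obtain ⟨hu₂lt, hu₂c, hu₂H⟩ := h₂
  have hppos := hp.out.pos
  have hdvd₁ := not_dvd_of_coprime hu₁c
  have hdvd₂ := not_dvd_of_coprime hu₂c
  have hr : ¬ p ∣ (u₁ % p) := fun hd => hdvd₁ ((Nat.dvd_mod_iff dvd_rfl).mp hd)
  have key : ∀ u : ℕ, u < p ^ 2 → u = u % p + (u / p) * p ∧ u / p < p := by
    intro u hu
    constructor
    · rw [Nat.mod_add_div' u p]
    · exact Nat.div_lt_of_lt_mul (by rw [pow_two] at hu; exact hu)
  obtain ⟨he₁, ht₁⟩ := key u₁ hu₁lt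
  obtain ⟨he₂, ht₂⟩ := key u₂ hu₂lt
  have he₂' : u₂ = u₁ % p + u₂ / p * p := by rw [h]; exact he₂
  rw [he₁, Hquot_formula _ _ hr] at hu₁H
  rw [he₂', Hquot_formula _ _ hr] at hu₂H
  rw [← hu₂H] at hu₁H
  have hwne : -(w : ZMod p) ≠ 0 := neg_ne_zero.mpr (w_ne_zero hw1 hw2)
  have hα := alpha_ne_zero hr
  have heq : ((u₁ / p : ℕ) : ZMod p) = ((u₂ / p : ℕ) : ZMod p) := by
    have h1 := mul_left_cancel₀ hwne hu₁H
    have h2 := add_left_cancel h1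
    exact mul_left_cancel₀ hα h2
  have hdiv : u₁ / p = u₂ / p := by
    have := congrArg ZMod.val heq
    rwa [ZMod.val_cast_of_lt ht₁, ZMod.val_cast_of_lt ht₂] at this
  rw [he₁, hdiv]
  exact he₂'.symm

/-- Surjectivity of `u ↦ u % p` from `Dset` onto `Ico 1 p`. -/
private lemma Dset_surj {w : ℕ} (hw1 : 1 ≤ w) (hw2 : w ≤ p - 1) (l : ZMod p)
    {r : ℕ} (hr1 : 1 ≤ r) (hr2 : r < p) :
    ∃ u ∈ Dset p w l, u % p = r := by
  haveI : NeZero p := ⟨hp.out.pos.ne'⟩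
  have hrd : ¬ p ∣ r := fun hd => by have := Nat.le_of_dvd hr1 hd; omega
  set α : ZMod p := ((p - 1 : ℕ) : ZMod p) * (r : ZMod p) ^ (p - 2) with hα
  have hαne := alpha_ne_zero hrd
  have hwne : -(w : ZMod p) ≠ 0 := neg_ne_zero.mpr (w_ne_zero hw1 hw2)
  set s : ZMod p := α⁻¹ * ((-(w : ZMod p))⁻¹ * l - ((Mq p r : ℤ) : ZMod p)) with hs
  refine ⟨r + s.val * p, ?_, ?_⟩
  · rw [mem_Dset_iff]
    refine ⟨?_, ?_, ?_⟩
    · have h1 : s.val < p := ZMod.val_lt s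
      have : r + s.val * p < p + s.val * p := by omega
      calc r + s.val * p < (s.val + 1) * p := by ring_nf; omega
        _ ≤ p * p := Nat.mul_le_mul_right p (by omega)
        _ = p ^ 2 := (sq p).symm
    · exact (hp.out.coprime_iff_not_dvd.mpr (coprime_add_mul hrd)).symm
    · rw [Hquot_formula _ _ hrd]
      have hsv : ((s.val : ℕ) : ZMod p) = s := ZMod.natCast_rightInverse s
      have hαne'' : α ≠ 0 := by rw [hα]; exact hαne
      rw [hsv, hs, ← hα, ← mul_assoc, mul_inv_cancel₀ hαne'', one_mul]
      have hmid : ((Mq p r : ℤ) : ZMod p) + ((-(w : ZMod p))⁻¹ * l - ((Mq p r : ℤ) : ZMod p))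
          = (-(w : ZMod p))⁻¹ * l := by ring
      rw [hmid, ← mul_assoc, mul_inv_cancel₀ hwne, one_mul]
  · rw [Nat.add_mul_mod_self_right, Nat.mod_eq_of_lt hr2]

private lemma legendre_mod (u : ℕ) : legendreSym p (u : ℤ) = legendreSym p ((u % p : ℕ) : ℤ) := by
  unfold legendreSym
  congr 1
  push_cast
  rfl

private lemma mod_mem_Ico {w : ℕ} {l : ZMod p} {u : ℕ} (hu : u ∈ Dset p w l) :
    u % p ∈ Finset.Ico 1 p := by
  rw [mem_Dset_iff] at hu
  have hd := not_dvd_of_coprime hu.2.1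
  have h1 : u % p ≠ 0 := fun h => hd (Nat.dvd_of_mod_eq_zero h)
  have h2 : u % p < p := Nat.mod_lt u hp.out.pos
  rw [Finset.mem_Ico]
  omega

/-- Sum over `Dset` transfers to sum over `Ico 1 p`. -/
private lemma sum_Dset {w : ℕ} (hw1 : 1 ≤ w) (hw2 : w ≤ p - 1) (l : ZMod p)
    (x : AlgebraicClosure (ZMod 2)) (hx : x ^ p = 1) :
    ∑ u ∈ Dset p w l, x ^ u = ∑ r ∈ Finset.Ico 1 p, x ^ r := by
  refine Finset.sum_bij (fun u _ => u % p) (fun u hu => mod_mem_Ico hu)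
    (fun u₁ h₁ u₂ h₂ h => Dset_inj hw1 hw2 h₁ h₂ h) ?_ ?_
  · intro r hr
    rw [Finset.mem_Ico] at hr
    obtain ⟨u, hu, hmod⟩ := Dset_surj hw1 hw2 l hr.1 hr.2
    exact ⟨u, hu, hmod⟩
  · intro u _
    conv_lhs => rw [← Nat.mod_add_div u p]
    rw [pow_add, pow_mul, hx, one_pow, mul_one]

private lemma mem_Nset_iff {w : ℕ} {l : ZMod p} {u : ℕ} :
    u ∈ Nset p w l ↔ u ∈ Dset p w l ∧ legendreSym p (u : ℤ) = -1 := by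
  unfold Nset
  simp [Finset.mem_filter]

/-- Sum over `Nset` transfers to sum over `QNR`. -/
private lemma sum_Nset {w : ℕ} (hw1 : 1 ≤ w) (hw2 : w ≤ p - 1) (l : ZMod p)
    (x : AlgebraicClosure (ZMod 2)) (hx : x ^ p = 1) :
    ∑ u ∈ Nset p w l, x ^ u = ∑ r ∈ QNR p, x ^ r := by
  refine Finset.sum_bij (fun u _ => u % p) ?_ ?_ ?_ ?_
  · intro u hu
    rw [mem_Nset_iff] at hu
    unfold QNR
    rw [Finset.mem_filter]
    exact ⟨mod_mem_Ico hu.1, by rw [← legendre_mod]; exact hu.2⟩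
  · intro u₁ h₁ u₂ h₂ h
    rw [mem_Nset_iff] at h₁ h₂
    exact Dset_inj hw1 hw2 h₁.1 h₂.1 h
  · intro r hr
    unfold QNR at hr
    rw [Finset.mem_filter, Finset.mem_Ico] at hr
    obtain ⟨⟨hr1, hr2⟩, hrleg⟩ := hr
    obtain ⟨u, hu, hmod⟩ := Dset_surj hw1 hw2 l hr1 hr2
    refine ⟨u, ?_, hmod⟩
    rw [mem_Nset_iff]
    refine ⟨hu, ?_⟩
    rw [legendre_mod, hmod]
    exact hrleg
  · intro u hu
    rw [mem_Nset_iff] at hu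
    conv_lhs => rw [← Nat.mod_add_div u p]
    rw [pow_add, pow_mul, hx, one_pow, mul_one]

/-- Legendre symbol is ±1 on `1 ≤ l < p`. -/
private lemma legSym_pm (l : ℕ) (h1 : 1 ≤ l) (h2 : l < p) :
    legendreSym p (l : ℤ) = 1 ∨ legendreSym p (l : ℤ) = -1 := by
  apply legendreSym.eq_one_or_neg_one
  rw [Ne, Int.cast_natCast, ZMod.natCast_eq_zero_iff]
  intro hd
  have := Nat.le_of_dvd h1 hd
  omega

/-- Cardinality of `QNR`. -/
private lemma card_QNR (hodd : p ≠ 2) : (QNR p).card = (p - 1) / 2 := by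
  have hchar : ringChar (ZMod p) ≠ 2 := by
    rw [ZMod.ringChar_zmod_n]; exact hodd
  haveI : NeZero p := ⟨hp.out.pos.ne'⟩
  have hsum1 : ∑ l ∈ Finset.Ico 1 p, legendreSym p (l : ℤ) = 0 := by
    have h1 : ∑ a ∈ Finset.univ.erase (0 : ZMod p), quadraticChar (ZMod p) a
        = ∑ a : ZMod p, quadraticChar (ZMod p) a := by
      apply Finset.sum_subset (Finset.subset_univ _)
      intro a _ ha
      have ha0 : a = 0 := by
        by_contra h
        exact ha (Finset.mem_erase.mpr ⟨h, Finset.mem_univ a⟩)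
      rw [ha0]; exact quadraticChar_zero
    have h2 : ∑ l ∈ Finset.Ico 1 p, legendreSym p (l : ℤ)
        = ∑ a ∈ Finset.univ.erase (0 : ZMod p), quadraticChar (ZMod p) a := by
      refine Finset.sum_bij (fun (l : ℕ) _ => ((l : ℕ) : ZMod p)) ?_ ?_ ?_ ?_
      · intro l hl
        rw [Finset.mem_Ico] at hl
        refine Finset.mem_erase.mpr ⟨?_, Finset.mem_univ _⟩
        rw [Ne, ZMod.natCast_eq_zero_iff]
        intro hd
        have := Nat.le_of_dvd hl.1 hd
        omega
      · intro l₁ h₁ l₂ h₂ h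
        rw [Finset.mem_Ico] at h₁ h₂
        have := congrArg ZMod.val h
        rwa [ZMod.val_cast_of_lt h₁.2, ZMod.val_cast_of_lt h₂.2] at this
      · intro a ha
        rw [Finset.mem_erase] at ha
        refine ⟨a.val, ?_, ZMod.natCast_rightInverse a⟩
        rw [Finset.mem_Ico]
        constructor
        · rcases Nat.eq_zero_or_pos a.val with h | h
          · exact absurd (by rwa [← ZMod.val_eq_zero]) ha.1
          · exact h
        · exact ZMod.val_lt a
      · intro l _
        unfold legendreSym
        congr 1
        push_cast
        rfl
    rw [h2, h1, quadraticChar_sum_zero hchar]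
  have hfilter : (Finset.Ico 1 p).filter (fun l : ℕ => ¬ legendreSym p (l : ℤ) = 1) = QNR p := by
    apply Finset.filter_congr
    intro l hl
    rw [Finset.mem_Ico] at hl
    rcases legSym_pm l hl.1 hl.2 with h | h
    · simp [h]
    · simp [h]
  have hQRes : (Finset.Ico 1 p).filter (fun l : ℕ => legendreSym p (l : ℤ) = 1) = QRes p := rfl
  have e1 : ∑ l ∈ QRes p, legendreSym p (l : ℤ) = ((QRes p).card : ℤ) := by
    have hv : ∀ l ∈ QRes p, legendreSym p (l : ℤ) = 1 :=
      fun l hl => (Finset.mem_filter.mp hl).2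
    rw [Finset.sum_congr rfl hv, Finset.sum_const, nsmul_eq_mul, mul_one]
  have e2 : ∑ l ∈ QNR p, legendreSym p (l : ℤ) = -((QNR p).card : ℤ) := by
    have hv : ∀ l ∈ QNR p, legendreSym p (l : ℤ) = -1 :=
      fun l hl => (Finset.mem_filter.mp hl).2
    rw [Finset.sum_congr rfl hv, Finset.sum_const, nsmul_eq_mul, mul_neg_one]
  have hsplit : ((QRes p).card : ℤ) - ((QNR p).card : ℤ) = 0 := by
    calc ((QRes p).card : ℤ) - ((QNR p).card : ℤ)
        = ∑ l ∈ QRes p, legendreSym p (l : ℤ) + ∑ l ∈ QNR p, legendreSym p (l : ℤ) := by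
          rw [e1, e2]; ring
      _ = ∑ l ∈ Finset.Ico 1 p, legendreSym p (l : ℤ) := by
          rw [← hQRes, ← hfilter]
          exact Finset.sum_filter_add_sum_filter_not (Finset.Ico 1 p)
            (fun l : ℕ => legendreSym p (l : ℤ) = 1) _
      _ = 0 := hsum1
  have hcard : (QRes p).card + (QNR p).card = p - 1 := by
    have h := Finset.card_filter_add_card_filter_not
      (s := Finset.Ico 1 p) (p := fun l : ℕ => legendreSym p (l : ℤ) = 1)
    rw [hfilter, hQRes, Nat.card_Ico] at h
    exact h
  have heq : (QRes p).card = (QNR p).card := by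
    have := sub_eq_zero.mp hsplit
    exact_mod_cast this
  omega

private lemma even_cast_zero {n : ℕ} (hn : Even n) : ((n : ℕ) : AlgebraicClosure (ZMod 2)) = 0 := by
  have h1 : ((n : ℕ) : ZMod 2) = 0 := by
    rw [ZMod.natCast_eq_zero_iff]
    exact hn.two_dvd
  calc ((n : ℕ) : AlgebraicClosure (ZMod 2))
      = algebraMap (ZMod 2) _ ((n : ℕ) : ZMod 2) := (map_natCast _ n).symm
    _ = 0 := by rw [h1, map_zero]

end AuxLemmas

/-- Lemma: values of `G^one` at `β^(kp)` for a primitive `p²`-th root of unity `β`. -/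
theorem GoneEval_at_pow_kp (p : ℕ) [hp : Fact p.Prime] (hodd : p ≠ 2)
    (w : ℕ) (hw1 : 1 ≤ w) (hw2 : w ≤ p - 1)
    (β : AlgebraicClosure (ZMod 2)) (hβ : IsPrimitiveRoot β (p ^ 2)) :
    GoneEval p w (β ^ 0) = (((p - 1) / 2 : ℕ) : AlgebraicClosure (ZMod 2)) ∧
    ∀ k : ℕ, 1 ≤ k → k ≤ p - 1 → GoneEval p w (β ^ (k * p)) = 0 := by
  have hp2 : 2 ≤ p := hp.out.two_le
  have hp3 : 3 ≤ p := by
    rcases Nat.lt_or_ge p 3 with h | h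
    · interval_cases p
      · exact absurd rfl hodd
    · exact h
  have hpeven : Even (p - 1) := Nat.Odd.sub_odd (hp.out.odd_of_ne_two hodd) odd_one
  constructor
  · -- value at β^0 = 1
    rw [pow_zero]
    unfold GoneEval GoddEval
    have hx : (1 : AlgebraicClosure (ZMod 2)) ^ p = 1 := one_pow p
    have hD : ∀ l : ZMod p, ∑ u ∈ Dset p w l, (1 : AlgebraicClosure (ZMod 2)) ^ u = 0 := by
      intro l
      rw [sum_Dset hw1 hw2 l 1 hx]
      simp only [one_pow]
      rw [Finset.sum_const, Nat.card_Ico, nsmul_eq_mul, mul_one]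
      exact even_cast_zero hpeven
    have hN : ∀ l : ZMod p, ∑ u ∈ Nset p w l, (1 : AlgebraicClosure (ZMod 2)) ^ u
        = (((QNR p).card : ℕ) : AlgebraicClosure (ZMod 2)) := by
      intro l
      rw [sum_Nset hw1 hw2 l 1 hx]
      simp only [one_pow]
      rw [Finset.sum_const, nsmul_eq_mul, mul_one]
    have h3 : ∑ l ∈ QNR p, (1 : AlgebraicClosure (ZMod 2)) ^ (l * p)
        = (((p - 1) / 2 : ℕ) : AlgebraicClosure (ZMod 2)) := by
      simp only [one_pow]
      rw [Finset.sum_const, nsmul_eq_mul, mul_one, card_QNR hodd]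
    have e1 : ∑ l ∈ QNR p, ∑ u ∈ Dset p w (l : ZMod p), (1 : AlgebraicClosure (ZMod 2)) ^ u
        = ∑ l ∈ QNR p, (0 : AlgebraicClosure (ZMod 2)) :=
      Finset.sum_congr rfl (fun l _ => hD (l : ZMod p))
    have e2 : ∑ l ∈ Finset.Ico 1 p, ∑ u ∈ Nset p w (l : ZMod p),
          (1 : AlgebraicClosure (ZMod 2)) ^ u
        = ∑ l ∈ Finset.Ico 1 p, (((QNR p).card : ℕ) : AlgebraicClosure (ZMod 2)) :=
      Finset.sum_congr rfl (fun l _ => hN (l : ZMod p))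
    rw [e1, e2, h3, Finset.sum_const_zero, Finset.sum_const, Nat.card_Ico, nsmul_eq_mul,
      even_cast_zero hpeven, zero_mul, zero_add, zero_add]
  · -- value at β^(k p)
    intro k hk1 hk2
    have hkp : ¬ p ∣ k := fun hd => by
      have := Nat.le_of_dvd hk1 hd
      omega
    have hζ : IsPrimitiveRoot (β ^ (k * p)) p := by
      have h1 : IsPrimitiveRoot (β ^ p) p := hβ.pow (by positivity) (pow_two p)
      have h2 := h1.pow_of_coprime k ((hp.out.coprime_iff_not_dvd.mpr hkp).symm)
      rw [← pow_mul, Nat.mul_comm p k] at h2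
      exact h2
    have hx : (β ^ (k * p)) ^ p = 1 := by
      rw [← pow_mul, show k * p * p = p ^ 2 * k by ring, pow_mul, hβ.pow_eq_one, one_pow]
    have hgeom : ∑ i ∈ Finset.range p, (β ^ (k * p)) ^ i = 0 :=
      hζ.geom_sum_eq_zero (by omega)
    have hA : ∑ r ∈ Finset.Ico 1 p, (β ^ (k * p)) ^ r = -1 := by
      have hsplit : ∑ i ∈ Finset.range p, (β ^ (k * p)) ^ i
          = (β ^ (k * p)) ^ 0 + ∑ r ∈ Finset.Ico 1 p, (β ^ (k * p)) ^ r := by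
        rw [Finset.range_eq_Ico]
        exact Finset.sum_eq_sum_Ico_succ_bot (by omega) _
      rw [hgeom, pow_zero] at hsplit
      linear_combination -hsplit
    have hxlp : ∀ l ∈ QNR p, (β ^ (k * p)) ^ (l * p) = 1 := by
      intro l _
      rw [← pow_mul, show k * p * (l * p) = p ^ 2 * (k * l) by ring, pow_mul,
        hβ.pow_eq_one, one_pow]
    unfold GoneEval GoddEval
    have e1 : ∑ l ∈ QNR p, ∑ u ∈ Dset p w (l : ZMod p), (β ^ (k * p)) ^ u
        = ∑ l ∈ QNR p, ∑ r ∈ Finset.Ico 1 p, (β ^ (k * p)) ^ r :=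
      Finset.sum_congr rfl (fun l _ => sum_Dset hw1 hw2 (l : ZMod p) _ hx)
    have e2 : ∑ l ∈ Finset.Ico 1 p, ∑ u ∈ Nset p w (l : ZMod p), (β ^ (k * p)) ^ u
        = ∑ l ∈ Finset.Ico 1 p, ∑ r ∈ QNR p, (β ^ (k * p)) ^ r :=
      Finset.sum_congr rfl (fun l _ => sum_Nset hw1 hw2 (l : ZMod p) _ hx)
    have e3 : ∑ l ∈ QNR p, (β ^ (k * p)) ^ (l * p)
        = ∑ l ∈ QNR p, (1 : AlgebraicClosure (ZMod 2)) :=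
      Finset.sum_congr rfl hxlp
    rw [e1, e2, e3, hA,
      Finset.sum_const, Finset.sum_const, Finset.sum_const, Nat.card_Ico,
      nsmul_eq_mul, nsmul_eq_mul, nsmul_eq_mul,
      even_cast_zero hpeven, zero_mul, mul_one]
    ring
end
end
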